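/- Let A, B : ℕ → ℕ satisfy A(1) = 56, B(1) = 124, and for all n ≥ 1: A(2n) = 4·A(n), A(2n+1) = A(n) + A(n+1) + 2·B(n), B(2n) = 2·A(n) + 2·B(n), B(2n+1) = 2·A(n+1) + 2·B(n). Then for all n ≥ 1, A(n) = 32n² + 72n·2^⌊log₂ n⌋ − 48·(2^⌊log₂ n⌋)². -/
import Mathlib

private def fR (n : ℕ) : ℤ :=
  32 * (n : ℤ) ^ 2 + 72 * (n : ℤ) * (2 ^ Nat.log 2 n : ℤ)
    - 48 * ((2 ^ Nat.log 2 n : ℤ)) ^ 2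

private lemma log2_two_mul {m : ℕ} (hm : 1 ≤ m) :
    Nat.log 2 (2 * m) = Nat.log 2 m + 1 := by
  rw [Nat.mul_comm]; exact Nat.log_mul_base one_lt_two (by omega)

private lemma log2_two_mul_add_one {m : ℕ} (hm : 1 ≤ m) :
    Nat.log 2 (2 * m + 1) = Nat.log 2 m + 1 := by
  apply Nat.log_eq_of_pow_le_of_lt_pow
  · have h1 : 2 ^ Nat.log 2 m ≤ m := Nat.pow_log_le_self 2 (by omega)
    rw [pow_succ]; omega
  · have h2 : m < 2 ^ (Nat.log 2 m + 1) := Nat.lt_pow_succ_log_self one_lt_two m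
    rw [pow_succ, pow_succ]; omega

private lemma fR_shift {m : ℕ} (hm : 1 ≤ m) :
    fR (m + 1) = fR m + 64 * m + 32 + 72 * (2 ^ Nat.log 2 m : ℤ) := by
  set L := Nat.log 2 m with hL
  rcases eq_or_ne (Nat.log 2 (m + 1)) L with h | h
  · simp only [fR, h, ← hL]
    push_cast; ring
  · -- then m + 1 = 2^(L+1) and log (m+1) = L+1
    have h1 : 2 ^ L ≤ m := Nat.pow_log_le_self 2 (by omega)
    have h2 : m < 2 ^ (L + 1) := Nat.lt_pow_succ_log_self one_lt_two m
    have hmono : L ≤ Nat.log 2 (m + 1) := Nat.log_mono_right (by omega)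
    have hle : Nat.log 2 (m + 1) ≤ L + 1 := by
      have := Nat.pow_log_le_self 2 (show m + 1 ≠ 0 by omega)
      by_contra hc
      have : 2 ^ (L + 2) ≤ 2 ^ Nat.log 2 (m + 1) :=
        Nat.pow_le_pow_right (by norm_num) (by omega)
      have h3 : 2 ^ (L + 2) = 2 * 2 ^ (L + 1) := by rw [pow_succ]; ring
      omega
    have hlog : Nat.log 2 (m + 1) = L + 1 := by omega
    have heq : m + 1 = 2 ^ (L + 1) := by
      have := Nat.pow_log_le_self 2 (show m + 1 ≠ 0 by omega)
      rw [hlog] at this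
      omega
    have heqZ : (m : ℤ) + 1 = 2 * 2 ^ L := by
      have h5 : ((m + 1 : ℕ) : ℤ) = ((2 ^ (L + 1) : ℕ) : ℤ) := by rw [heq]
      push_cast [pow_succ] at h5
      linarith
    simp only [fR, hlog, ← hL]
    push_cast [pow_succ]
    nlinarith [heqZ]

theorem robinson_complexity
    (A B : ℕ → ℕ)
    (hA1 : A 1 = 56) (hB1 : B 1 = 124)
    (hA2 : ∀ n ≥ 1, A (2 * n) = 4 * A n)
    (hA3 : ∀ n ≥ 1, A (2 * n + 1) = A n + A (n + 1) + 2 * B n)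
    (hB2 : ∀ n ≥ 1, B (2 * n) = 2 * A n + 2 * B n)
    (hB3 : ∀ n ≥ 1, B (2 * n + 1) = 2 * A (n + 1) + 2 * B n) :
    ∀ n ≥ 1, (A n : ℤ) =
      32 * (n : ℤ) ^ 2 + 72 * (n : ℤ) * (2 ^ Nat.log 2 n : ℤ)
        - 48 * ((2 ^ Nat.log 2 n : ℤ)) ^ 2 := by
  have key : ∀ n, 1 ≤ n → (A n : ℤ) = fR n ∧
      (B n : ℤ) = fR n + 32 * n + 36 * (2 ^ Nat.log 2 n : ℤ) := by
    intro n
    induction n using Nat.strong_induction_on with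
    | _ n ih =>
      intro hn
      rcases Nat.lt_or_ge n 2 with h2 | h2
      · interval_cases n
        constructor <;> simp [fR, hA1, hB1]
      · rcases Nat.even_or_odd n with ⟨m, hmeq⟩ | ⟨m, hmeq⟩
        · -- n = 2m
          have hm : 1 ≤ m := by omega
          have hmeq' : n = 2 * m := by omega
          subst hmeq'
          obtain ⟨ihA, ihB⟩ := ih m (by omega) hm
          have hlog := log2_two_mul hm
          constructor
          · rw [hA2 m hm]
            simp only [fR, hlog] at *
            push_cast [pow_succ]
            push_cast [pow_succ] at ihA
            linarith
          · rw [hB2 m hm]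
            simp only [fR, hlog] at *
            push_cast [pow_succ]
            push_cast [pow_succ] at ihA ihB
            linarith
        · -- n = 2m + 1
          have hm : 1 ≤ m := by omega
          have hmeq' : n = 2 * m + 1 := by omega
          subst hmeq'
          obtain ⟨ihA, ihB⟩ := ih m (by omega) hm
          obtain ⟨ihA1, _⟩ := ih (m + 1) (by omega) (by omega)
          have hlog := log2_two_mul_add_one hm
          have hAm1 : (A (m + 1) : ℤ) =
              fR m + 64 * m + 32 + 72 * (2 ^ Nat.log 2 m : ℤ) := by
            rw [ihA1, fR_shift hm]
          simp only [fR] at ihA ihB hAm1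
          push_cast [pow_succ] at ihA ihB hAm1
          constructor
          · rw [hA3 m hm]
            simp only [fR, hlog]
            push_cast [pow_succ]
            linarith
          · rw [hB3 m hm]
            simp only [fR, hlog]
            push_cast [pow_succ]
            linarith
  intro n hn
  exact (key n hn).1
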